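/- For m ≥ 0 and n ≥ m+3: if the Q_m-subcube fault diameter of Q_{n−1} is at most n, then for any family F of at most n−m−3 pairwise vertex-disjoint subcubes of dimension at most m in Q_{n−1}, the graph Q_{n−1} − F is connected with diameter at most n−1. -/

import Mathlib

open SimpleGraph

/-- The `n`-dimensional hypercube: vertices are `Fin n → Bool`,
adjacent iff Hamming distance is `1`. -/
def Q (n : ℕ) : SimpleGraph (Fin n → Bool) where
  Adj u v := hammingDist u v = 1
  symm := ⟨fun u v h => by rwa [hammingDist_comm]⟩
  loopless := ⟨fun u h => by simp [hammingDist_self] at h⟩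

/-- Flip the `i`-th bit of `x`. -/
def flipBit {n : ℕ} (x : Fin n → Bool) (i : Fin n) : Fin n → Bool :=
  Function.update x i (!x i)

/-- `S` is a subcube of dimension exactly `m` (fixing `n - m` coordinates). -/
def IsSubcube {n : ℕ} (m : ℕ) (S : Set (Fin n → Bool)) : Prop :=
  ∃ A : Finset (Fin n), A.card = n - m ∧ ∃ p : Fin n → Bool,
    S = {x | ∀ i ∈ A, x i = p i}

/-- `S` is a subcube of dimension at most `m` (fixing at least `n - m` coordinates). -/
def IsSubcubeLe {n : ℕ} (m : ℕ) (S : Set (Fin n → Bool)) : Prop :=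
  ∃ A : Finset (Fin n), n - m ≤ A.card ∧ ∃ p : Fin n → Bool,
    S = {x | ∀ i ∈ A, x i = p i}

namespace FD

open Finset Function

variable {N : ℕ}

abbrev Pt (N : ℕ) := Fin N → Bool
abbrev Fault (N : ℕ) := Finset (Fin N) × (Fin N → Bool)

def inS (q : Fault N) (w : Pt N) : Prop := ∀ i ∈ q.1, w i = q.2 i

instance (q : Fault N) (w : Pt N) : Decidable (inS q w) := by
  unfold inS; infer_instance

lemma bool3 (a b c : Bool) (h1 : a ≠ b) (h2 : c ≠ b) : c = a := by
  cases a <;> cases b <;> cases c <;> simp_all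

lemma adj_update (x : Pt N) (i : Fin N) (b : Bool) (h : x i ≠ b) :
    (Q N).Adj x (Function.update x i b) := by
  show hammingDist x (Function.update x i b) = 1
  have : ({j | x j ≠ Function.update x i b j} : Finset (Fin N)) = {i} := by
    ext j
    rcases eq_or_ne j i with rfl | hj
    · simp [Function.update_self, h]
    · simp [Function.update_of_ne hj, hj]
  rw [hammingDist, this, card_singleton]

lemma hd_update_left (x y : Pt N) (i : Fin N) (h : x i ≠ y i) :
    hammingDist (Function.update x i (y i)) y + 1 = hammingDist x y := by
  have hmem : i ∈ ({j | x j ≠ y j} : Finset (Fin N)) := by simp [h]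
  have : ({j | Function.update x i (y i) j ≠ y j} : Finset (Fin N))
      = ({j | x j ≠ y j} : Finset (Fin N)).erase i := by
    ext j
    rcases eq_or_ne j i with rfl | hj
    · simp [Function.update_self]
    · simp [Function.update_of_ne hj, hj]
  rw [hammingDist, hammingDist, this, card_erase_add_one hmem]

lemma hd_update_right (x y : Pt N) (i : Fin N) (h : x i ≠ y i) :
    hammingDist x (Function.update y i (x i)) + 1 = hammingDist x y := by
  rw [hammingDist_comm x y, hammingDist_comm x (Function.update y i (x i))]
  exact hd_update_left y x i (Ne.symm h)

lemma hd_flip_pair (x y : Pt N) (a : Fin N) (h : x a = y a) :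
    hammingDist (Function.update x a (!x a)) (Function.update y a (!y a)) = hammingDist x y := by
  have : ({j | Function.update x a (!x a) j ≠ Function.update y a (!y a) j} : Finset (Fin N))
      = ({j | x j ≠ y j} : Finset (Fin N)) := by
    ext j
    rcases eq_or_ne j a with rfl | hj
    · simp [Function.update_self, h]
    · simp [Function.update_of_ne hj]
  rw [hammingDist, hammingDist, this]

lemma flip_walk : ∀ (d : ℕ) (x y : Pt N), hammingDist x y = d →
    ∃ W : (Q N).Walk x y, W.length = d ∧
      ∀ w ∈ W.support, ∀ j, x j = y j → w j = x j := by
  intro d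
  induction d with
  | zero =>
    intro x y hd
    obtain rfl : x = y := hammingDist_eq_zero.mp hd
    exact ⟨Walk.nil, rfl, by simp⟩
  | succ d ih =>
    intro x y hd
    have hne : x ≠ y := by
      intro h; subst h; simp at hd
    have : ∃ i, x i ≠ y i := by
      by_contra hcon
      push_neg at hcon
      exact hne (funext hcon)
    obtain ⟨i, hi⟩ := this
    set x' := Function.update x i (y i) with hx'
    have hd' : hammingDist x' y = d := by
      have h2 := hd_update_left x y i hi
      rw [← hx'] at h2
      omega
    obtain ⟨W', hlen, hsupp⟩ := ih x' y hd'
    refine ⟨Walk.cons (adj_update x i (y i) hi) W', by simp [hlen], ?_⟩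
    intro w hw j hj
    rw [Walk.support_cons] at hw
    rcases List.mem_cons.mp hw with rfl | hw
    · rfl
    · have hj' : x' j = y j := by
        rcases eq_or_ne j i with rfl | hji
        · simp [hx', Function.update_self]
        · simp [hx', Function.update_of_ne hji, hj]
      have := hsupp w hw j hj'
      rw [this, hj']
      exact hj.symm

def restrictF (F : Finset (Fault N)) (c : Fin N) (val : Bool) : Finset (Fault N) :=
  (F.filter fun q => c ∈ q.1 → q.2 c = val).image fun q => (q.1.erase c, q.2)

lemma rF_card (F : Finset (Fault N)) (c : Fin N) (val : Bool) :
    (restrictF F c val).card ≤ F.card :=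
  le_trans (card_image_le) (card_filter_le _ _)

lemma rF_card_lt (F : Finset (Fault N)) (c : Fin N) (val : Bool) {q₀ : Fault N}
    (h0 : q₀ ∈ F) (hc : c ∈ q₀.1) (hv : q₀.2 c ≠ val) :
    (restrictF F c val).card + 1 ≤ F.card := by
  have hsub : (F.filter fun q => c ∈ q.1 → q.2 c = val) ⊆ F.erase q₀ := by
    intro q hq
    rw [mem_filter] at hq
    rw [mem_erase]
    refine ⟨?_, hq.1⟩
    intro rfl'
    subst rfl'
    exact hv (hq.2 hc)
  have h1 : (restrictF F c val).card ≤ (F.erase q₀).card :=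
    le_trans card_image_le (card_le_card hsub)
  have h2 : (F.erase q₀).card + 1 = F.card := card_erase_add_one h0
  omega

lemma rF_mem {F : Finset (Fault N)} {c : Fin N} {val : Bool} {q' : Fault N}
    (h : q' ∈ restrictF F c val) :
    ∃ q ∈ F, (c ∈ q.1 → q.2 c = val) ∧ q' = (q.1.erase c, q.2) := by
  rw [restrictF, mem_image] at h
  obtain ⟨q, hq, rfl⟩ := h
  rw [mem_filter] at hq
  exact ⟨q, hq.1, hq.2, rfl⟩

lemma rF_avoid_endpoint {F : Finset (Fault N)} {c : Fin N} {val : Bool} (v : Pt N)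
    (hv : v c = val) (h : ∀ q ∈ F, ¬ inS q v) :
    ∀ q' ∈ restrictF F c val, ¬ inS q' v := by
  intro q' hq' hin
  obtain ⟨q, hqF, hkept, rfl⟩ := rF_mem hq'
  refine h q hqF ?_
  intro i hi
  rcases eq_or_ne i c with rfl | hic
  · rw [hv, hkept hi]
  · exact hin i (mem_erase.mpr ⟨hic, hi⟩)

lemma rF_avoid_back {F : Finset (Fault N)} {c : Fin N} {val : Bool} (w : Pt N)
    (hw : w c = val) (h : ∀ q' ∈ restrictF F c val, ¬ inS q' w) :
    ∀ q ∈ F, ¬ inS q w := by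
  intro q hq hin
  by_cases hkept : c ∈ q.1 → q.2 c = val
  · have hmem : (q.1.erase c, q.2) ∈ restrictF F c val := by
      rw [restrictF, mem_image]
      exact ⟨q, mem_filter.mpr ⟨hq, hkept⟩, rfl⟩
    exact h _ hmem (fun i hi => hin i (mem_of_mem_erase hi))
  · push_neg at hkept
    exact hkept.2 ((hin c hkept.1).symm.trans hw)

lemma toInduce {V : Type*} {G : SimpleGraph V} {s : Set V} :
    ∀ {a b : V} (W : G.Walk a b) (_ : ∀ v ∈ W.support, v ∈ s) (ha : a ∈ s) (hb : b ∈ s),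
    ∃ W' : (G.induce s).Walk ⟨a, ha⟩ ⟨b, hb⟩, W'.length = W.length := by
  intro a b W
  induction W with
  | nil => intro _ ha hb; exact ⟨Walk.nil, rfl⟩
  | @cons u c b h p ih =>
    intro hsupp ha hb
    have hc : c ∈ s := hsupp c (by simp)
    obtain ⟨W', hW'⟩ := ih (fun v hv => hsupp v (by simp [hv])) hc hb
    have hadj : (G.induce s).Adj ⟨u, ha⟩ ⟨c, hc⟩ := h
    exact ⟨Walk.cons hadj W', by simp [hW']⟩

lemma main (N : ℕ) : ∀ (k : ℕ) (K : Finset (Fin N)) (F : Finset (Fault N)) (M : ℕ)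
    (x y : Pt N),
    K.card ≤ k →
    (∀ q ∈ F, q.1 ⊆ K) →
    (∀ q ∈ F, K.card ≤ q.1.card + M) →
    F.card + M + 2 ≤ K.card →
    (∀ j, j ∉ K → x j = y j) →
    (∀ q ∈ F, ¬ inS q x) →
    (∀ q ∈ F, ¬ inS q y) →
    ∃ W : (Q N).Walk x y,
      (W.length ≤ hammingDist x y ∨ W.length ≤ F.card + M + 2) ∧
      (∀ w ∈ W.support, ∀ j, j ∉ K → w j = x j) ∧
      (∀ w ∈ W.support, ∀ q ∈ F, ¬ inS q w) := by
  intro k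
  induction k with
  | zero =>
    intro K F M x y hKk _ _ hbud _ _ _
    omega
  | succ k ih =>
    intro K F M x y hKk hsub hdim hbud hoff hx hy
    by_cases hxy : x = y
    · subst hxy
      refine ⟨Walk.nil, Or.inl (by simp), ?_, ?_⟩
      · intro w hw j _; rw [Walk.support_nil, List.mem_singleton] at hw; subst hw; rfl
      · intro w hw; rw [Walk.support_nil, List.mem_singleton] at hw; subst hw; exact hx
    rcases F.eq_empty_or_nonempty with rfl | hFne
    · obtain ⟨W, hlen, hsupp⟩ := flip_walk (hammingDist x y) x y rfl
      refine ⟨W, Or.inl (le_of_eq hlen), ?_, by simp⟩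
      intro w hw j hj
      exact hsupp w hw j (hoff j hj)
    by_cases h3 : ∃ q ∈ F, ∃ a ∈ q.1, x a = y a ∧ q.2 a ≠ x a
    · -- case (b): recurse into half w a = x a, dropping q₀
      obtain ⟨q₀, hq₀F, a, haq, hxya, hqa⟩ := h3
      have haK : a ∈ K := hsub q₀ hq₀F haq
      set F' := restrictF F a (x a) with hF'
      have hcard' : F'.card + 1 ≤ F.card := rF_card_lt F a (x a) hq₀F haq hqa
      have hKe : (K.erase a).card + 1 = K.card := card_erase_add_one haK
      obtain ⟨W, hlen, hoffW, havoidW⟩ := ih (K.erase a) F' M x y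
        (by omega)
        (by intro q' hq'
            obtain ⟨q, hqF, _, rfl⟩ := rF_mem hq'
            exact (erase_subset_erase a (hsub q hqF)))
        (by intro q' hq'
            obtain ⟨q, hqF, _, rfl⟩ := rF_mem hq'
            have h1 := hdim q hqF
            have h2 : (q.1.erase a).card + 1 ≥ q.1.card := by
              by_cases hm : a ∈ q.1
              · rw [card_erase_add_one hm]
              · rw [Finset.erase_eq_of_notMem hm]; omega
            simp only
            omega)
        (by omega)
        (by intro j hj
            rcases eq_or_ne j a with rfl | hja
            · exact hxya
            · exact hoff j (fun hK' => hj (mem_erase.mpr ⟨hja, hK'⟩)))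
        (rF_avoid_endpoint x rfl hx)
        (rF_avoid_endpoint y hxya.symm hy)
      refine ⟨W, ?_, ?_, ?_⟩
      · rcases hlen with h | h
        · exact Or.inl h
        · right; omega
      · intro w hw j hj
        exact hoffW w hw j (fun hK' => hj (mem_of_mem_erase hK'))
      · intro w hw
        have hwa : w a = x a := hoffW w hw a (notMem_erase a K)
        exact rF_avoid_back w hwa (havoidW w hw)
    · push_neg at h3
      by_cases h4 : ∃ i, x i ≠ y i ∧ ∀ q ∈ F, i ∉ q.1
      · -- case c3: free halving along differing coordinate i
        obtain ⟨i, hi, hiq⟩ := h4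
        have hiK : i ∈ K := by
          by_contra hiK
          exact hi (hoff i hiK)
        have hKe : (K.erase i).card + 1 = K.card := card_erase_add_one hiK
        obtain ⟨q₀, hq₀F⟩ := hFne
        have hq₀sub : q₀.1 ⊆ K.erase i := subset_erase.mpr ⟨hsub q₀ hq₀F, hiq q₀ hq₀F⟩
        have hq₀card : q₀.1.card ≤ (K.erase i).card := card_le_card hq₀sub
        have hq₀dim := hdim q₀ hq₀F
        set y' := Function.update y i (x i) with hy'
        obtain ⟨W', hlen, hoffW, havoidW⟩ := ih (K.erase i) F (M - 1) x y'
          (by omega)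
          (by intro q hq; exact subset_erase.mpr ⟨hsub q hq, hiq q hq⟩)
          (by intro q hq
              have h1 := hdim q hq
              have h2 : q.1.card ≤ (K.erase i).card :=
                card_le_card (subset_erase.mpr ⟨hsub q hq, hiq q hq⟩)
              omega)
          (by omega)
          (by intro j hj
              rcases eq_or_ne j i with rfl | hji
              · rw [hy', Function.update_self]
              · rw [hy', Function.update_of_ne hji]
                exact hoff j (fun hK' => hj (mem_erase.mpr ⟨hji, hK'⟩)))
          hx
          (by intro q hq hin
              refine hy q hq ?_
              intro c hc
              have hci : c ≠ i := fun h => (hiq q hq) (h ▸ hc)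
              have := hin c hc
              rwa [hy', Function.update_of_ne hci] at this)
        have hadj : (Q N).Adj y' y := by
          have := adj_update y i (x i) (Ne.symm hi)
          exact this.symm
        have hd' : hammingDist x y' + 1 = hammingDist x y := by
          rw [hy']; exact hd_update_right x y i hi
        refine ⟨W'.concat hadj, ?_, ?_, ?_⟩
        · rw [Walk.length_concat]
          rcases hlen with h | h
          · left; omega
          · right; omega
        · intro w hw j hj
          simp only [Walk.support_concat, List.concat_eq_append, List.mem_append, List.mem_singleton] at hw
          rcases hw with hw | hw
          · exact hoffW w hw j (fun hK' => hj (mem_of_mem_erase hK'))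
          · subst hw
            exact (hoff j hj).symm
        · intro w hw
          simp only [Walk.support_concat, List.concat_eq_append, List.mem_append, List.mem_singleton] at hw
          rcases hw with hw | hw
          · exact havoidW w hw
          · subst hw; exact hy
      · push_neg at h4
        by_cases h5 : ∃ i, x i ≠ y i ∧ (∃ q ∈ F, i ∈ q.1 ∧ q.2 i = y i) ∧
            ∀ q ∈ F, ¬ inS q (Function.update y i (x i))
        · -- case c1
          obtain ⟨i, hi, ⟨q₀, hq₀F, hiq₀, hq₀y⟩, hynf⟩ := h5
          have hiK : i ∈ K := hsub q₀ hq₀F hiq₀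
          have hKe : (K.erase i).card + 1 = K.card := card_erase_add_one hiK
          set F' := restrictF F i (x i) with hF'
          have hcard' : F'.card + 1 ≤ F.card :=
            rF_card_lt F i (x i) hq₀F hiq₀ (by rw [hq₀y]; exact Ne.symm hi)
          set y' := Function.update y i (x i) with hy'
          obtain ⟨W', hlen, hoffW, havoidW⟩ := ih (K.erase i) F' M x y'
            (by omega)
            (by intro q' hq'
                obtain ⟨q, hqF, _, rfl⟩ := rF_mem hq'
                exact (erase_subset_erase i (hsub q hqF)))
            (by intro q' hq'
                obtain ⟨q, hqF, _, rfl⟩ := rF_mem hq'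
                have h1 := hdim q hqF
                have h2 : (q.1.erase i).card + 1 ≥ q.1.card := by
                  by_cases hm : i ∈ q.1
                  · rw [card_erase_add_one hm]
                  · rw [Finset.erase_eq_of_notMem hm]; omega
                simp only
                omega)
            (by omega)
            (by intro j hj
                rcases eq_or_ne j i with rfl | hji
                · rw [hy', Function.update_self]
                · rw [hy', Function.update_of_ne hji]
                  exact hoff j (fun hK' => hj (mem_erase.mpr ⟨hji, hK'⟩)))
            (rF_avoid_endpoint x rfl hx)
            (rF_avoid_endpoint y' (by rw [hy', Function.update_self]) hynf)
          have hadj : (Q N).Adj y' y := (adj_update y i (x i) (Ne.symm hi)).symm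
          have hd' : hammingDist x y' + 1 = hammingDist x y := by
            rw [hy']; exact hd_update_right x y i hi
          refine ⟨W'.concat hadj, ?_, ?_, ?_⟩
          · rw [Walk.length_concat]
            rcases hlen with h | h
            · left; omega
            · right; omega
          · intro w hw j hj
            simp only [Walk.support_concat, List.concat_eq_append, List.mem_append, List.mem_singleton] at hw
            rcases hw with hw | hw
            · exact hoffW w hw j (fun hK' => hj (mem_of_mem_erase hK'))
            · subst hw
              exact (hoff j hj).symm
          · intro w hw
            simp only [Walk.support_concat, List.concat_eq_append, List.mem_append, List.mem_singleton] at hw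
            rcases hw with hw | hw
            · have hwi : w i = x i := hoffW w hw i (notMem_erase i K)
              exact rF_avoid_back w hwi (havoidW w hw)
            · subst hw; exact hy
        · by_cases h6 : ∃ i, x i ≠ y i ∧ (∃ q ∈ F, i ∈ q.1 ∧ q.2 i = x i) ∧
              ∀ q ∈ F, ¬ inS q (Function.update x i (y i))
          · -- case c2
            obtain ⟨j, hj, ⟨q₀, hq₀F, hjq₀, hq₀x⟩, hxnf⟩ := h6
            have hjK : j ∈ K := hsub q₀ hq₀F hjq₀
            have hKe : (K.erase j).card + 1 = K.card := card_erase_add_one hjK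
            set F' := restrictF F j (y j) with hF'
            have hcard' : F'.card + 1 ≤ F.card :=
              rF_card_lt F j (y j) hq₀F hjq₀ (by rw [hq₀x]; exact hj)
            set x' := Function.update x j (y j) with hx'
            obtain ⟨W', hlen, hoffW, havoidW⟩ := ih (K.erase j) F' M x' y
              (by omega)
              (by intro q' hq'
                  obtain ⟨q, hqF, _, rfl⟩ := rF_mem hq'
                  exact (erase_subset_erase j (hsub q hqF)))
              (by intro q' hq'
                  obtain ⟨q, hqF, _, rfl⟩ := rF_mem hq'
                  have h1 := hdim q hqF
                  have h2 : (q.1.erase j).card + 1 ≥ q.1.card := by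
                    by_cases hm : j ∈ q.1
                    · rw [card_erase_add_one hm]
                    · rw [Finset.erase_eq_of_notMem hm]; omega
                  simp only
                  omega)
              (by omega)
              (by intro jj hjj
                  rcases eq_or_ne jj j with rfl | hjjj
                  · rw [hx', Function.update_self]
                  · rw [hx', Function.update_of_ne hjjj]
                    exact hoff jj (fun hK' => hjj (mem_erase.mpr ⟨hjjj, hK'⟩)))
              (rF_avoid_endpoint x' (by rw [hx', Function.update_self]) hxnf)
              (rF_avoid_endpoint y rfl hy)
            have hadj : (Q N).Adj x x' := adj_update x j (y j) hj
            have hd' : hammingDist x' y + 1 = hammingDist x y := by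
              rw [hx']; exact hd_update_left x y j hj
            refine ⟨Walk.cons hadj W', ?_, ?_, ?_⟩
            · rw [Walk.length_cons]
              rcases hlen with h | h
              · left; omega
              · right; omega
            · intro w hw jj hjj
              rw [Walk.support_cons, List.mem_cons] at hw
              rcases hw with rfl | hw
              · rfl
              · have := hoffW w hw jj (fun hK' => hjj (mem_of_mem_erase hK'))
                rw [this, hx', Function.update_of_ne (fun h : jj = j => hjj (by rw [h]; exact hjK))]
            · intro w hw
              rw [Walk.support_cons, List.mem_cons] at hw
              rcases hw with rfl | hw
              · exact hx
              · have hwj : w j = y j := by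
                  have := hoffW w hw j (notMem_erase j K)
                  rw [this, hx', Function.update_self]
                exact rF_avoid_back w hwj (havoidW w hw)
          · -- case 7
            push_neg at h5 h6
            have hy' : ∀ i, x i ≠ y i → ∃ q ∈ F, inS q (Function.update y i (x i)) := by
              intro i hi
              obtain ⟨q₁, hq₁F, hq₁i⟩ := h4 i hi
              by_cases hb : q₁.2 i = y i
              · exact h5 i hi ⟨q₁, hq₁F, hq₁i, hb⟩
              · have hbx : q₁.2 i = x i := bool3 (x i) (y i) (q₁.2 i) hi hb
                obtain ⟨v, hvF, hvin⟩ := h6 i hi ⟨q₁, hq₁F, hq₁i, hbx⟩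
                have hiv : i ∈ v.1 := by
                  by_contra hiv
                  refine hx v hvF ?_
                  intro c hc
                  have hci : c ≠ i := fun h => hiv (h ▸ hc)
                  have := hvin c hc
                  rwa [Function.update_of_ne hci] at this
                have hviy : v.2 i = y i := by
                  have := hvin i hiv
                  rw [Function.update_self] at this
                  exact this.symm
                exact h5 i hi ⟨v, hvF, hiv, hviy⟩
            -- counting: hammingDist x y ≤ F.card
            set D := ({i | x i ≠ y i} : Finset (Fin N)) with hD
            have hDd : hammingDist x y = D.card := rfl
            have hchoice : ∀ i ∈ D, ∃ q, q ∈ F ∧ inS q (Function.update y i (x i)) := by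
              intro i hi
              have hxyi : x i ≠ y i := by
                rw [hD, Finset.mem_filter] at hi
                exact hi.2
              obtain ⟨q, hqF, hq⟩ := hy' i hxyi
              exact ⟨q, hqF, hq⟩
            choose! φ hφF hφin using hchoice
            have hdF : D.card ≤ F.card := by
              refine Finset.card_le_card_of_injOn φ (fun i hi => hφF i hi) ?_
              intro i₁ h₁ i₂ h₂ heq
              by_contra hne
              rw [Finset.mem_coe] at h₁ h₂
              have hx2 : x i₂ ≠ y i₂ := by
                rw [hD, Finset.mem_filter] at h₂
                exact h₂.2
              have hin1 := hφin i₁ h₁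
              have hin2 := hφin i₂ h₂
              rw [heq] at hin1
              set q := φ i₂ with hq
              have hi2q : i₂ ∉ q.1 := by
                intro hmem
                have e1 := hin1 i₂ hmem
                have e2 := hin2 i₂ hmem
                rw [Function.update_of_ne (Ne.symm hne)] at e1
                rw [Function.update_self] at e2
                exact hx2 (e2.trans e1.symm)
              refine hy q (hφF i₂ h₂) ?_
              intro c hc
              have hc2 : c ≠ i₂ := fun e => hi2q (e ▸ hc)
              have := hin2 c hc
              rwa [Function.update_of_ne hc2] at this
            have hd0 : D.card ≠ 0 := by
              intro h0
              rw [← hDd] at h0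
              exact hxy (hammingDist_eq_zero.mp h0)
            have hd1 : D.card ≠ 1 := by
              intro h1
              obtain ⟨b, hb⟩ := Finset.card_eq_one.mp h1
              have hbD : b ∈ D := hb ▸ Finset.mem_singleton_self b
              have hxb : x b ≠ y b := by
                rw [hD, Finset.mem_filter] at hbD
                exact hbD.2
              have hupd : Function.update y b (x b) = x := by
                funext j
                rcases eq_or_ne j b with rfl | hjb
                · rw [Function.update_self]
                · rw [Function.update_of_ne hjb]
                  have hjD : j ∉ D := by
                    rw [hb]
                    simpa using hjb
                  rw [hD, Finset.mem_filter] at hjD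
                  push_neg at hjD
                  exact (hjD (Finset.mem_univ j)).symm
              obtain ⟨q, hqF, hqin⟩ := hy' b hxb
              rw [hupd] at hqin
              exact hx q hqF hqin
            obtain ⟨q₀, hq₀F⟩ := hFne
            have hnsub : ¬ q₀.1 ⊆ D := by
              intro hsubD
              have h1 : q₀.1.card ≤ D.card := card_le_card hsubD
              have h2 := hdim q₀ hq₀F
              omega
            obtain ⟨a, haq, haD⟩ := Finset.not_subset.mp hnsub
            have hxa : x a = y a := by
              rw [hD, Finset.mem_filter] at haD
              push_neg at haD
              exact haD (Finset.mem_univ a)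
            have haK : a ∈ K := hsub q₀ hq₀F haq
            have hKe : (K.erase a).card + 1 = K.card := card_erase_add_one haK
            set xs := Function.update x a (!x a) with hxs
            set ys := Function.update y a (!y a) with hys
            set F' := F.filter (fun q => a ∉ q.1) with hF'
            have hF'le : F'.card + 1 ≤ F.card := by
              have hss : F' ⊆ F.erase q₀ := by
                intro q hq
                rw [hF', mem_filter] at hq
                rw [mem_erase]
                exact ⟨fun e => hq.2 (e ▸ haq), hq.1⟩
              have := card_le_card hss
              have := card_erase_add_one hq₀F
              omega
            have hM0 : M = 0 → F'.card = 0 := by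
              intro hM
              rw [Finset.card_eq_zero]
              refine Finset.eq_empty_of_forall_notMem ?_
              intro q hq
              rw [hF', mem_filter] at hq
              have h1 : q.1 ⊆ K.erase a := subset_erase.mpr ⟨hsub q hq.1, hq.2⟩
              have h2 : q.1.card ≤ (K.erase a).card := card_le_card h1
              have h3' := hdim q hq.1
              omega
            obtain ⟨W', hlen, hoffW, havoidW⟩ := ih (K.erase a) F' (M - 1) xs ys
              (by omega)
              (by intro q hq
                  rw [hF', mem_filter] at hq
                  exact subset_erase.mpr ⟨hsub q hq.1, hq.2⟩)
              (by intro q hq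
                  rw [hF', mem_filter] at hq
                  have h1 : q.1.card ≤ (K.erase a).card :=
                    card_le_card (subset_erase.mpr ⟨hsub q hq.1, hq.2⟩)
                  have h2 := hdim q hq.1
                  omega)
              (by omega)
              (by intro j hj
                  rcases eq_or_ne j a with rfl | hja
                  · rw [hxs, hys, Function.update_self, Function.update_self, hxa]
                  · rw [hxs, hys, Function.update_of_ne hja, Function.update_of_ne hja]
                    exact hoff j (fun hK' => hj (mem_erase.mpr ⟨hja, hK'⟩)))
              (by intro q hq hin
                  rw [hF', mem_filter] at hq
                  refine hx q hq.1 ?_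
                  intro c hc
                  have hca : c ≠ a := fun e => hq.2 (e ▸ hc)
                  have := hin c hc
                  rwa [hxs, Function.update_of_ne hca] at this)
              (by intro q hq hin
                  rw [hF', mem_filter] at hq
                  refine hy q hq.1 ?_
                  intro c hc
                  have hca : c ≠ a := fun e => hq.2 (e ▸ hc)
                  have := hin c hc
                  rwa [hys, Function.update_of_ne hca] at this)
            have hadj1 : (Q N).Adj x xs := adj_update x a (!x a) (by cases x a <;> simp)
            have hadj2 : (Q N).Adj ys y :=
              (adj_update y a (!y a) (by cases y a <;> simp)).symm
            have hdstar : hammingDist xs ys = D.card := by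
              rw [hxs, hys, hd_flip_pair x y a hxa, hDd]
            refine ⟨Walk.cons hadj1 (W'.concat hadj2), ?_, ?_, ?_⟩
            · rw [Walk.length_cons, Walk.length_concat]
              right
              rw [hdstar] at hlen
              rcases hlen with h | h
              · omega
              · rcases Nat.eq_zero_or_pos M with hM | hM
                · have hF0 := hM0 hM
                  omega
                · omega
            · intro w hw j hj
              rw [Walk.support_cons, List.mem_cons] at hw
              rcases hw with rfl | hw
              · rfl
              · simp only [Walk.support_concat, List.concat_eq_append, List.mem_append, List.mem_singleton] at hw
                rcases hw with hw | hw
                · have hja : j ≠ a := fun e => hj (e ▸ haK)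
                  have := hoffW w hw j (fun hK' => hj (mem_of_mem_erase hK'))
                  rw [this, hxs, Function.update_of_ne hja]
                · subst hw
                  exact (hoff j hj).symm
            · intro w hw q hq
              rw [Walk.support_cons, List.mem_cons] at hw
              rcases hw with rfl | hw
              · exact hx q hq
              · simp only [Walk.support_concat, List.concat_eq_append, List.mem_append, List.mem_singleton] at hw
                rcases hw with hw | hw
                · by_cases haq' : a ∈ q.1
                  · have hq2 : q.2 a = x a := h3 q hq a haq' hxa
                    intro hin
                    have hwa : w a = xs a := hoffW w hw a (notMem_erase a K)
                    rw [hxs, Function.update_self] at hwa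
                    have hcontr := hin a haq'
                    rw [hwa, hq2] at hcontr
                    exact absurd hcontr (by cases x a <;> simp)
                  · exact havoidW w hw q (by rw [hF', mem_filter]; exact ⟨hq, haq'⟩)
                · subst hw
                  exact hy q hq

theorem final_goal (n m : ℕ) (h : m + 3 ≤ n)
    (hyp : ∀ F : Finset (Set (Fin (n - 1) → Bool)), F.card ≤ n - m - 2 →
      (∀ S ∈ F, IsSubcubeLe m S) →
      (∀ S ∈ F, ∀ T ∈ F, S ≠ T → Disjoint S T) →
      ((Q (n - 1)).induce (⋃₀ (↑F : Set (Set (Fin (n - 1) → Bool))))ᶜ).Connected ∧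
      ∀ x y, ((Q (n - 1)).induce (⋃₀ (↑F : Set (Set (Fin (n - 1) → Bool))))ᶜ).dist x y ≤ n) :
    ∀ F : Finset (Set (Fin (n - 1) → Bool)), F.card ≤ n - m - 3 →
      (∀ S ∈ F, IsSubcubeLe m S) →
      (∀ S ∈ F, ∀ T ∈ F, S ≠ T → Disjoint S T) →
      ((Q (n - 1)).induce (⋃₀ (↑F : Set (Set (Fin (n - 1) → Bool))))ᶜ).Connected ∧
      ∀ x y, ((Q (n - 1)).induce (⋃₀ (↑F : Set (Set (Fin (n - 1) → Bool))))ᶜ).dist x y ≤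
        n - 1 := by
  intro F hcard hsubc hdisj
  classical
  constructor
  · exact (hyp F (by omega) hsubc hdisj).1
  · intro x y
    -- build fault representation
    have hrep : ∀ S : {S // S ∈ F}, ∃ q : Fault (n-1),
        ((n-1) - m ≤ q.1.card) ∧ S.1 = {w | ∀ i ∈ q.1, w i = q.2 i} := by
      rintro ⟨S, hS⟩
      obtain ⟨A, hA, p, hp⟩ := hsubc S hS
      exact ⟨(A, p), hA, hp⟩
    choose g hg1 hg2 using hrep
    set Fh : Finset (Fault (n-1)) := F.attach.image g with hFh
    have hFhcard : Fh.card ≤ F.card := le_trans card_image_le (le_of_eq (card_attach))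
    have hNcard : (Finset.univ : Finset (Fin (n-1))).card = n - 1 := by
      rw [card_univ, Fintype.card_fin]
    have hxnf : ∀ q ∈ Fh, ¬ inS q (x : Fin (n-1) → Bool) := by
      intro q hq hin
      rw [hFh, mem_image] at hq
      obtain ⟨⟨S, hS⟩, _, rfl⟩ := hq
      refine x.2 ?_
      rw [Set.mem_sUnion]
      refine ⟨S, hS, ?_⟩
      have hSeq : S = {w | ∀ i ∈ (g ⟨S, hS⟩).1, w i = (g ⟨S, hS⟩).2 i} := hg2 ⟨S, hS⟩
      rw [hSeq]
      exact hin
    have hynf : ∀ q ∈ Fh, ¬ inS q (y : Fin (n-1) → Bool) := by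
      intro q hq hin
      rw [hFh, mem_image] at hq
      obtain ⟨⟨S, hS⟩, _, rfl⟩ := hq
      refine y.2 ?_
      rw [Set.mem_sUnion]
      refine ⟨S, hS, ?_⟩
      have hSeq : S = {w | ∀ i ∈ (g ⟨S, hS⟩).1, w i = (g ⟨S, hS⟩).2 i} := hg2 ⟨S, hS⟩
      rw [hSeq]
      exact hin
    obtain ⟨W, hlen, _, havoid⟩ := main (n-1) ((Finset.univ : Finset (Fin (n-1))).card)
      Finset.univ Fh m (x : Fin (n-1) → Bool) (y : Fin (n-1) → Bool)
      (le_refl _)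
      (fun q _ => subset_univ _)
      (by intro q hq
          rw [hFh, mem_image] at hq
          obtain ⟨⟨S, hS⟩, _, rfl⟩ := hq
          have := hg1 ⟨S, hS⟩
          omega)
      (by omega)
      (fun j hj => absurd (mem_univ j) hj)
      hxnf
      hynf
    have hWlen : W.length ≤ n - 1 := by
      rcases hlen with hl | hl
      · have := hammingDist_le_card_fintype (x := (x : Fin (n-1) → Bool))
          (y := (y : Fin (n-1) → Bool))
        rw [Fintype.card_fin] at this
        omega
      · omega
    have hWsupp : ∀ v ∈ W.support, v ∈ (⋃₀ (↑F : Set (Set (Fin (n - 1) → Bool))))ᶜ := by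
      intro v hv
      intro hvmem
      rw [Set.mem_sUnion] at hvmem
      obtain ⟨S, hSF, hvS⟩ := hvmem
      rw [Finset.mem_coe] at hSF
      have hgm : g ⟨S, hSF⟩ ∈ Fh := by
        rw [hFh, mem_image]
        exact ⟨⟨S, hSF⟩, mem_attach _ _, rfl⟩
      refine havoid v hv (g ⟨S, hSF⟩) hgm ?_
      have hSeq : S = {w | ∀ i ∈ (g ⟨S, hSF⟩).1, w i = (g ⟨S, hSF⟩).2 i} := hg2 ⟨S, hSF⟩
      rw [hSeq] at hvS
      exact hvS
    obtain ⟨W', hW'len⟩ := toInduce W hWsupp x.2 y.2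
    have hdist := SimpleGraph.dist_le W'
    rw [hW'len] at hdist
    exact le_trans hdist hWlen

end FD

theorem fewer_faults_diameter (n m : ℕ) (h : m + 3 ≤ n)
    (hyp : ∀ F : Finset (Set (Fin (n - 1) → Bool)), F.card ≤ n - m - 2 →
      (∀ S ∈ F, IsSubcubeLe m S) →
      (∀ S ∈ F, ∀ T ∈ F, S ≠ T → Disjoint S T) →
      ((Q (n - 1)).induce (⋃₀ (↑F : Set (Set (Fin (n - 1) → Bool))))ᶜ).Connected ∧
      ∀ x y, ((Q (n - 1)).induce (⋃₀ (↑F : Set (Set (Fin (n - 1) → Bool))))ᶜ).dist x y ≤ n) :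
    ∀ F : Finset (Set (Fin (n - 1) → Bool)), F.card ≤ n - m - 3 →
      (∀ S ∈ F, IsSubcubeLe m S) →
      (∀ S ∈ F, ∀ T ∈ F, S ≠ T → Disjoint S T) →
      ((Q (n - 1)).induce (⋃₀ (↑F : Set (Set (Fin (n - 1) → Bool))))ᶜ).Connected ∧
      ∀ x y, ((Q (n - 1)).induce (⋃₀ (↑F : Set (Set (Fin (n - 1) → Bool))))ᶜ).dist x y ≤
        n - 1 := by
  exact FD.final_goal n m h hyp
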